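/- Let λ ∈ 𝕊ⁿ with λ ≠ u_n, where u_n = (1/n, …, 1/n), and let P be an n×n doubly stochastic matrix with λP = u_n. Then for every n×n permutation matrix Q, the Frobenius norm satisfies ‖P − Q‖_F ≥ 1. In particular ‖P − I_n‖_F ≥ 1, so the practical turnover τ̃_P(λ) = τ(λ)·‖P − I_n‖ (with the norm taken up to permutation, i.e., minimized over permutation matrices Q in ‖P − Q‖_F) is at least the theoretical turnover τ(λ) = (1/2) Σ_{i=1}^n |λ_i − 1/n|. -/

import Mathlib

open Finset Matrix

/-- A doubly stochastic matrix. -/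
def IsDoublyStochastic {n : ℕ} (P : Matrix (Fin n) (Fin n) ℝ) : Prop :=
  (∀ i j, 0 ≤ P i j) ∧ (∀ i, ∑ j, P i j = 1) ∧ (∀ j, ∑ i, P i j = 1)

/-- A permutation matrix. -/
def IsPermMatrix {n : ℕ} (P : Matrix (Fin n) (Fin n) ℝ) : Prop :=
  ∃ σ : Equiv.Perm (Fin n), ∀ i j, P i j = if σ i = j then 1 else 0

/-- The Frobenius norm `‖A‖_F = (∑_{i,j} |a_{ij}|²)^{1/2}`. -/
noncomputable def frobNorm {n : ℕ} (A : Matrix (Fin n) (Fin n) ℝ) : ℝ :=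
  Real.sqrt (∑ i, ∑ j, |A i j| ^ 2)

/-- The theoretical turnover of rebalancing `λ` to equality:
`τ(λ) = (1/2) ∑ |λᵢ − 1/n|`. -/
noncomputable def turnover {n : ℕ} (l : Fin n → ℝ) : ℝ :=
  (1 / 2) * ∑ i, |l i - (n : ℝ)⁻¹|

/-- If `λ ∈ 𝕊ⁿ`, `λ ≠ u_n`, and `P` is doubly stochastic with `λP = u_n`, then
`‖P − Q‖_F ≥ 1` for every permutation matrix `Q` (in particular for `Q = I_n`),
so the practical turnover `τ(λ) · min_Q ‖P − Q‖_F` is at least the theoretical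
turnover `τ(λ)`. -/
theorem practical_turnover_ge {n : ℕ} (l : Fin n → ℝ)
    (hl : l ∈ stdSimplex ℝ (Fin n)) (hne : l ≠ fun _ => (n : ℝ)⁻¹)
    (P : Matrix (Fin n) (Fin n) ℝ) (hP : IsDoublyStochastic P)
    (hPu : l ᵥ* P = fun _ => (n : ℝ)⁻¹) :
    (∀ Q : Matrix (Fin n) (Fin n) ℝ, IsPermMatrix Q → 1 ≤ frobNorm (P - Q)) ∧
    1 ≤ frobNorm (P - 1) ∧
    turnover l ≤
      turnover l *
        sInf {t : ℝ | ∃ Q : Matrix (Fin n) (Fin n) ℝ, IsPermMatrix Q ∧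
          t = frobNorm (P - Q)} := by
  classical
  set v : Fin n → ℝ := fun i => l i - (n : ℝ)⁻¹ with hv
  have hvP : ∀ j, ∑ i, v i * P i j = 0 := by
    intro j
    have h1 : ∑ i, l i * P i j = (n : ℝ)⁻¹ := by
      have := congrFun hPu j
      simpa [Matrix.vecMul, dotProduct] using this
    have h2 : ∑ i, P i j = 1 := hP.2.2 j
    have h3 : ∑ i, v i * P i j = ∑ i, l i * P i j - (n : ℝ)⁻¹ * ∑ i, P i j := by
      rw [Finset.mul_sum, ← Finset.sum_sub_distrib]
      exact Finset.sum_congr rfl fun i _ => by simp [hv]; ring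
    rw [h3, h1, h2]; ring
  have hvne : ∃ i, v i ≠ 0 := by
    by_contra h
    push_neg at h
    exact hne (funext fun i => by have := h i; simp [hv] at this; linarith)
  obtain ⟨i0, hi0⟩ := hvne
  have hS : 0 < ∑ i, v i ^ 2 :=
    Finset.sum_pos' (fun i _ => sq_nonneg _) ⟨i0, Finset.mem_univ _, by positivity⟩
  have key : ∀ Q : Matrix (Fin n) (Fin n) ℝ, IsPermMatrix Q → 1 ≤ frobNorm (P - Q) := by
    intro Q hQ
    obtain ⟨σ, hσ⟩ := hQ
    have hvQ : ∀ j, ∑ i, v i * Q i j = v (σ.symm j) := by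
      intro j
      rw [Finset.sum_eq_single (σ.symm j)]
      · simp [hσ]
      · intro b _ hb
        have : ¬ σ b = j := fun h => hb (by simp [← h])
        simp [hσ, this]
      · simp
    have hdiff : ∀ j, ∑ i, v i * (P - Q) i j = - v (σ.symm j) := by
      intro j
      have : ∑ i, v i * (P - Q) i j = ∑ i, v i * P i j - ∑ i, v i * Q i j := by
        rw [← Finset.sum_sub_distrib]
        exact Finset.sum_congr rfl fun i _ => by simp [Matrix.sub_apply]; ring
      rw [this, hvP, hvQ]; ring
    have hsum : ∑ j, (∑ i, v i * (P - Q) i j) ^ 2 = ∑ i, v i ^ 2 := by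
      simp only [hdiff, neg_sq]
      simpa using Equiv.sum_comp σ.symm (fun i => v i ^ 2)
    have hF2 : 1 ≤ ∑ i, ∑ j, |(P - Q) i j| ^ 2 := by
      have hcs : ∀ j, (∑ i, v i * (P - Q) i j) ^ 2
          ≤ (∑ i, v i ^ 2) * (∑ i, ((P - Q) i j) ^ 2) :=
        fun j => Finset.sum_mul_sq_le_sq_mul_sq _ _ _
      have h4 : ∑ i, v i ^ 2 ≤ (∑ i, v i ^ 2) * ∑ j, ∑ i, ((P - Q) i j) ^ 2 := by
        calc ∑ i, v i ^ 2 = ∑ j, (∑ i, v i * (P - Q) i j) ^ 2 := hsum.symm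
          _ ≤ ∑ j, (∑ i, v i ^ 2) * (∑ i, ((P - Q) i j) ^ 2) :=
              Finset.sum_le_sum fun j _ => hcs j
          _ = (∑ i, v i ^ 2) * ∑ j, ∑ i, ((P - Q) i j) ^ 2 := by
              rw [Finset.mul_sum]
      have h5 : 1 ≤ ∑ j, ∑ i, ((P - Q) i j) ^ 2 := by
        nlinarith [hS]
      calc (1 : ℝ) ≤ ∑ j, ∑ i, ((P - Q) i j) ^ 2 := h5
        _ = ∑ i, ∑ j, |(P - Q) i j| ^ 2 := by
            rw [Finset.sum_comm]
            exact Finset.sum_congr rfl fun i _ => Finset.sum_congr rfl fun j _ => by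
              rw [sq_abs]
      -- done
    have : Real.sqrt 1 ≤ Real.sqrt (∑ i, ∑ j, |(P - Q) i j| ^ 2) :=
      Real.sqrt_le_sqrt hF2
    simpa [frobNorm] using this
  have hone : IsPermMatrix (1 : Matrix (Fin n) (Fin n) ℝ) :=
    ⟨Equiv.refl _, fun i j => by simp [Matrix.one_apply]; congr⟩
  refine ⟨key, key 1 hone, ?_⟩
  have hτ : 0 ≤ turnover l := by
    unfold turnover
    positivity
  have hset : (1 : ℝ) ≤ sInf {t : ℝ | ∃ Q : Matrix (Fin n) (Fin n) ℝ, IsPermMatrix Q ∧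
      t = frobNorm (P - Q)} := by
    have hnem : {t : ℝ | ∃ Q : Matrix (Fin n) (Fin n) ℝ, IsPermMatrix Q ∧
        t = frobNorm (P - Q)}.Nonempty := ⟨frobNorm (P - 1), 1, hone, rfl⟩
    apply le_csInf hnem
    rintro t ⟨Q, hQ, rfl⟩
    exact key Q hQ
  calc turnover l = turnover l * 1 := (mul_one _).symm
    _ ≤ _ := mul_le_mul_of_nonneg_left hset hτ
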